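/- Let Λ be an 𝔽_q-lattice in C with e_Λ(X) = ∑_{i≥0} α_i(Λ) X^{q^i}. If α_k(Λ) = 0 for some k ≥ 1, then Λ is k-inseparable, i.e., for a successive minimum basis λ₁, λ₂, ... of Λ one has |λ_k| = |λ_{k+1}|. -/

import Mathlib

open Polynomial

section Aux

variable {Cinf : Type*} [Field Cinf]

/-- Ultrametric bound for finite sums, strict version. -/
lemma ultra_sum_lt {ι : Type*} (v : AbsoluteValue Cinf ℝ)
    (hna : ∀ x y : Cinf, v (x + y) ≤ max (v x) (v y))
    (s : Finset ι) (f : ι → Cinf) (B : ℝ) (hB : 0 < B)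
    (h : ∀ i ∈ s, v (f i) < B) : v (∑ i ∈ s, f i) < B := by
  classical
  induction s using Finset.cons_induction with
  | empty => simpa using hB
  | cons a s ha ih =>
    rw [Finset.sum_cons]
    refine lt_of_le_of_lt (hna _ _) ?_
    exact max_lt (h a (Finset.mem_cons_self a s))
      (ih fun i hi => h i (Finset.mem_cons.2 (Or.inr hi)))

/-- Coefficients of a product of linear polynomials `1 + f x * X` are
elementary symmetric sums. -/
lemma coeff_prod_one_add_mul_X {R : Type*} [CommRing R] [DecidableEq R]
    (s : Finset R) (f : R → R) (m : ℕ) :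
    (∏ x ∈ s, (1 + C (f x) * X)).coeff m
      = ∑ T ∈ s.powersetCard m, ∏ x ∈ T, f x := by
  have h1 : ∀ x ∈ s, (1 : R[X]) + C (f x) * X = C (f x) * X + 1 := fun x _ => by ring
  rw [Finset.prod_congr rfl h1, Finset.prod_add]
  have h2 : ∀ t ∈ s.powerset,
      (∏ x ∈ t, (C (f x) * X)) * ∏ _x ∈ s \ t, (1 : R[X])
        = C (∏ x ∈ t, f x) * X ^ t.card := by
    intro t _
    rw [Finset.prod_const_one, mul_one, Finset.prod_mul_distrib, Finset.prod_const,
      map_prod]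
  rw [Finset.sum_congr rfl h2, finset_sum_coeff]
  have h3 : ∀ t ∈ s.powerset,
      (C (∏ x ∈ t, f x) * X ^ t.card).coeff m
        = if t.card = m then ∏ x ∈ t, f x else 0 := by
    intro t _
    rw [coeff_C_mul, coeff_X_pow]
    by_cases h : m = t.card
    · simp [h]
    · simp [h, Ne.symm h]
  rw [Finset.sum_congr rfl h3, Finset.sum_ite, Finset.sum_const_zero, add_zero,
    Finset.powersetCard_eq_filter]

/-- A family each of whose members lies outside the span of the preceding ones is
linearly independent. -/
lemma li_of_pred {K V : Type*} [Field K] [AddCommGroup V] [Module K V] :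
    ∀ (m : ℕ) (f : Fin m → V),
      (∀ i, f i ∉ Submodule.span K (f '' {j | j < i})) → LinearIndependent K f := by
  intro m
  induction m with
  | zero => intro f _; exact linearIndependent_empty_type
  | succ m ih =>
    intro f h
    have hf : f = Fin.snoc (f ∘ Fin.castSucc) (f (Fin.last m)) := by
      funext i
      induction i using Fin.lastCases with
      | last => simp
      | cast i => simp
    rw [hf, linearIndependent_fin_snoc]
    constructor
    · apply ih
      intro i hi
      apply h i.castSucc
      refine Submodule.span_mono ?_ hi
      rintro _ ⟨j, hj, rfl⟩
      exact ⟨j.castSucc, Fin.castSucc_lt_castSucc_iff.mpr hj, rfl⟩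
    · intro hx
      apply h (Fin.last m)
      refine Submodule.span_mono ?_ hx
      rintro _ ⟨j, rfl⟩
      exact ⟨j.castSucc, Fin.castSucc_lt_last j, rfl⟩

end Aux

/-- first half of the spectral principle.  Let `Λ` be an `𝔽_q`-lattice
in a nonarchimedean valued field (a finite-dimensional `𝔽_q`-subspace of dimension
`n > k` suffices), with exponential `e_Λ(X) = X·∏'_{λ∈Λ}(1−X/λ) = ∑ α_i X^{q^i}`.
If `α_k(Λ) = 0` for some `k ≥ 1`, then `Λ` is `k`-inseparable: a successive minimum
basis `l 0, l 1, …` (zero-based; the paper's `λ_i` is `l (i-1)`) satisfies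
`|λ_k| = |λ_{k+1}|`, i.e. `v (l (k-1)) = v (l k)`. -/
theorem alpha_k_zero_implies_k_inseparable
    {F Cinf : Type*} [Field F] [Fintype F] [Field Cinf] [Algebra F Cinf] [DecidableEq Cinf]
    (q : ℕ) (hq : Fintype.card F = q)
    (v : AbsoluteValue Cinf ℝ)
    (hna : ∀ x y : Cinf, v (x + y) ≤ max (v x) (v y))
    (htriv : ∀ c : F, c ≠ 0 → v (algebraMap F Cinf c) = 1)
    (n k : ℕ) (hk : 1 ≤ k) (hkn : k < n)
    (S : Finset Cinf) (l : Fin n → Cinf)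
    (hSspan : (S : Set Cinf) = (Submodule.span F (Set.range l) : Set Cinf))
    (hSMB : ∀ i : Fin n,
      l i ∉ Submodule.span F (l '' {j | j < i}) ∧
      ∀ μ ∈ Submodule.span F (Set.range l),
        μ ∉ Submodule.span F (l '' {j | j < i}) → v (l i) ≤ v μ)
    (hzero : (X * ∏ lam ∈ S.erase 0, (1 - C lam⁻¹ * X)).coeff (q ^ k) = 0) :
    v (l ⟨k - 1, by omega⟩) = v (l ⟨k, by omega⟩) := by
  classical
  by_contra hne
  set kk : Fin n := ⟨k, by omega⟩ with hkk
  set kk1 : Fin n := ⟨k - 1, by omega⟩ with hkk1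
  -- basic facts
  have hl_ne : ∀ i : Fin n, l i ≠ 0 := by
    intro i hi
    exact (hSMB i).1 (hi ▸ Submodule.zero_mem _)
  have hmono : ∀ i j : Fin n, i ≤ j → v (l i) ≤ v (l j) := by
    intro i j hij
    refine (hSMB i).2 (l j) (Submodule.subset_span ⟨j, rfl⟩) ?_
    intro hmem
    exact (hSMB j).1 (Submodule.span_mono
      (Set.image_mono fun t ht => lt_of_lt_of_le ht hij) hmem)
  have hABle : v (l kk1) ≤ v (l kk) := hmono kk1 kk (by
    rw [hkk1, hkk, Fin.mk_le_mk]; omega)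
  have hne' : v (l kk1) ≠ v (l kk) := hne
  have hABlt : v (l kk1) < v (l kk) := lt_of_le_of_ne hABle hne'
  have hApos : 0 < v (l kk1) := v.pos (hl_ne kk1)
  have hBpos : 0 < v (l kk) := v.pos (hl_ne kk)
  -- the submodule spanned by the first k vectors
  set g : Fin k → Cinf := fun i => l (Fin.castLE (le_of_lt hkn) i) with hg
  have hrange : l '' {j : Fin n | j < kk} = Set.range g := by
    ext x
    constructor
    · rintro ⟨j, hj, rfl⟩
      have hj' : (j : ℕ) < k := hj
      refine ⟨⟨(j : ℕ), hj'⟩, ?_⟩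
      show l _ = l j
      congr 1
    · rintro ⟨i, rfl⟩
      exact ⟨Fin.castLE (le_of_lt hkn) i, by
        simpa [hkk, Fin.lt_def] using i.isLt, rfl⟩
  have hWeq : Submodule.span F (l '' {j : Fin n | j < kk})
      = Submodule.span F (Set.range g) := by rw [hrange]
  -- bound for elements of the span of the first k vectors
  have hWbound : ∀ μ ∈ Submodule.span F (Set.range g), v μ ≤ v (l kk1) := by
    intro μ hμ
    induction hμ using Submodule.span_induction with
    | mem x hx =>
      obtain ⟨i, rfl⟩ := hx
      refine hmono _ kk1 ?_
      simp only [hg, hkk1, Fin.le_def, Fin.coe_castLE]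
      omega
    | zero => simpa using hApos.le
    | add x y hx hy ihx ihy => exact le_trans (hna x y) (max_le ihx ihy)
    | smul c x hx ihx =>
      rw [Algebra.smul_def, v.map_mul]
      rcases eq_or_ne c 0 with rfl | hc
      · simpa using hApos.le
      · rw [htriv c hc, one_mul]; exact ihx
  have hWS : (Submodule.span F (Set.range g) : Set Cinf) ⊆ (S : Set Cinf) := by
    rw [hSspan, ← hWeq]
    exact Submodule.span_mono (Set.image_subset_range _ _)
  -- elements of the lattice outside the span of the first k vectors are large
  have hout : ∀ x ∈ S, x ∉ Submodule.span F (Set.range g) → v (l kk) ≤ v x := by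
    intro x hx hxW
    refine (hSMB kk).2 x ?_ ?_
    · have hx' : x ∈ (S : Set Cinf) := hx
      rw [hSspan] at hx'
      exact hx'
    · rw [hWeq]; exact hxW
  -- cardinality of the span of the first k vectors
  have hfinW : ((Submodule.span F (Set.range g) : Submodule F Cinf) : Set Cinf).Finite :=
    S.finite_toSet.subset hWS
  have hgli : LinearIndependent F g := by
    apply li_of_pred
    intro i hi
    apply (hSMB (Fin.castLE (le_of_lt hkn) i)).1
    refine Submodule.span_mono ?_ hi
    rintro _ ⟨j, hj, rfl⟩
    refine ⟨Fin.castLE (le_of_lt hkn) j, ?_, rfl⟩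
    simp only [Set.mem_setOf_eq, Fin.lt_def, Fin.coe_castLE]
    exact hj
  set WF : Finset Cinf := hfinW.toFinset with hWF
  have hmemWF : ∀ x : Cinf, x ∈ WF ↔ x ∈ Submodule.span F (Set.range g) := by
    intro x
    rw [hWF, Set.Finite.mem_toFinset, SetLike.mem_coe]
  letI instW : Fintype ↥(Submodule.span F (Set.range g)) := Fintype.ofFinset WF hmemWF
  have hWFcard : WF.card = q ^ k := by
    have h1 : Fintype.card ↥(Submodule.span F (Set.range g)) = WF.card :=
      Fintype.card_ofFinset WF hmemWF
    have h2 := Module.card_fintype (Module.Basis.span hgli)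
    rw [h1] at h2
    rw [h2, hq, Fintype.card_fin]
  -- the dominant subset
  set T₀ : Finset Cinf := (S.erase 0).filter
    (fun x => x ∈ Submodule.span F (Set.range g)) with hT₀
  have hT₀sub : T₀ ⊆ S.erase 0 := Finset.filter_subset _ _
  have hT₀eq : T₀ = WF.erase 0 := by
    ext x
    simp only [hT₀, Finset.mem_filter, Finset.mem_erase, hmemWF]
    constructor
    · rintro ⟨⟨hx0, _⟩, hxW⟩; exact ⟨hx0, hxW⟩
    · rintro ⟨hx0, hxW⟩
      exact ⟨⟨hx0, by exact_mod_cast hWS hxW⟩, hxW⟩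
  have hq0 : 0 < q := by
    have : 0 < Fintype.card F := Fintype.card_pos
    omega
  have hq1 : 1 ≤ q ^ k := Nat.one_le_pow _ _ hq0
  set m : ℕ := q ^ k - 1 with hm
  have hT₀card : T₀.card = m := by
    rw [hT₀eq, Finset.card_erase_of_mem
      (by rw [hmemWF]; exact Submodule.zero_mem _), hWFcard]
  have hT₀mem : T₀ ∈ (S.erase 0).powersetCard m :=
    Finset.mem_powersetCard.mpr ⟨hT₀sub, hT₀card⟩
  -- rewrite the coefficient hypothesis
  have e1 : ∏ lam ∈ S.erase 0, (1 - C lam⁻¹ * X)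
      = ∏ lam ∈ S.erase 0, (1 + C (-(lam⁻¹)) * X) :=
    Finset.prod_congr rfl fun x _ => by rw [map_neg, neg_mul, sub_eq_add_neg]
  rw [e1, show q ^ k = m + 1 by omega, coeff_X_mul,
    coeff_prod_one_add_mul_X] at hzero
  -- positivity of valuations
  have hposS : ∀ x ∈ S.erase 0, 0 < v x := fun x hx =>
    v.pos (Finset.ne_of_mem_erase hx)
  have hprodpos : ∀ T : Finset Cinf, T ⊆ S.erase 0 → 0 < ∏ x ∈ T, v x := fun T hT =>
    Finset.prod_pos fun x hx => hposS x (hT hx)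
  -- the key comparison of products
  have hkey : ∀ T ∈ (S.erase 0).powersetCard m, T ≠ T₀ →
      ∏ x ∈ T₀, v x < ∏ x ∈ T, v x := by
    intro T hT hTne
    obtain ⟨hTsub, hTcard⟩ := Finset.mem_powersetCard.mp hT
    have hc1 := Finset.card_sdiff_add_card_inter T₀ T
    have hc2 := Finset.card_sdiff_add_card_inter T T₀
    rw [Finset.inter_comm] at hc2
    have hdiffcard : (T₀ \ T).card = (T \ T₀).card := by omega
    have hnonempty : (T \ T₀).Nonempty := by
      rw [Finset.sdiff_nonempty]
      intro hsub
      exact hTne (Finset.eq_of_subset_of_card_le hsub (by omega))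
    set m1 : ℕ := (T \ T₀).card with hm1
    have hm1ne : m1 ≠ 0 := Nat.pos_iff_ne_zero.mp (Finset.card_pos.mpr hnonempty)
    have hstep1 : ∏ x ∈ T₀ \ T, v x ≤ v (l kk1) ^ m1 := by
      have h := Finset.prod_le_prod (f := fun x => v x) (g := fun _ => v (l kk1))
        (s := T₀ \ T) (fun x _ => v.nonneg x)
        (fun x hx => by
          have hx' : x ∈ T₀ := (Finset.mem_sdiff.mp hx).1
          exact hWbound x (Finset.mem_filter.mp hx').2)
      rwa [Finset.prod_const, hdiffcard] at h
    have hstep2 : v (l kk1) ^ m1 < v (l kk) ^ m1 :=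
      pow_lt_pow_left₀ hABlt hApos.le hm1ne
    have hstep3 : v (l kk) ^ m1 ≤ ∏ x ∈ T \ T₀, v x := by
      have h := Finset.prod_le_prod (f := fun _ => v (l kk)) (g := fun x => v x)
        (s := T \ T₀) (fun x _ => hBpos.le)
        (fun x hx => by
          obtain ⟨hxT, hxnT₀⟩ := Finset.mem_sdiff.mp hx
          have hxS : x ∈ S.erase 0 := hTsub hxT
          have hxW : x ∉ Submodule.span F (Set.range g) := by
            intro hxW
            exact hxnT₀ (Finset.mem_filter.mpr ⟨hxS, hxW⟩)
          exact hout x (Finset.mem_of_mem_erase hxS) hxW)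
      rwa [Finset.prod_const] at h
    have hinterpos : 0 < ∏ x ∈ T₀ ∩ T, v x :=
      hprodpos _ ((Finset.inter_subset_left).trans hT₀sub)
    calc ∏ x ∈ T₀, v x
        = (∏ x ∈ T₀ ∩ T, v x) * ∏ x ∈ T₀ \ T, v x :=
          (Finset.prod_inter_mul_prod_diff T₀ T _).symm
      _ ≤ (∏ x ∈ T₀ ∩ T, v x) * v (l kk1) ^ m1 :=
          mul_le_mul_of_nonneg_left hstep1 hinterpos.le
      _ < (∏ x ∈ T₀ ∩ T, v x) * v (l kk) ^ m1 :=
          mul_lt_mul_of_pos_left hstep2 hinterpos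
      _ ≤ (∏ x ∈ T₀ ∩ T, v x) * ∏ x ∈ T \ T₀, v x :=
          mul_le_mul_of_nonneg_left hstep3 hinterpos.le
      _ = (∏ x ∈ T ∩ T₀, v x) * ∏ x ∈ T \ T₀, v x := by rw [Finset.inter_comm]
      _ = ∏ x ∈ T, v x := Finset.prod_inter_mul_prod_diff T T₀ _
  -- valuation of the products appearing in the sum
  have hvP : ∀ T : Finset Cinf, T ⊆ S.erase 0 →
      v (∏ x ∈ T, (-x⁻¹)) = (∏ x ∈ T, v x)⁻¹ := by
    intro T hT
    rw [map_prod v, ← Finset.prod_inv_distrib]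
    refine Finset.prod_congr rfl fun x _ => ?_
    rw [v.map_neg, map_inv₀ v]
  have hvT₀pos : 0 < v (∏ x ∈ T₀, (-x⁻¹)) := by
    rw [hvP T₀ hT₀sub]
    exact inv_pos.mpr (hprodpos T₀ hT₀sub)
  -- extract the dominant term
  rw [← Finset.add_sum_erase _ _ hT₀mem] at hzero
  have heq : ∏ x ∈ T₀, (-x⁻¹)
      = -∑ T ∈ ((S.erase 0).powersetCard m).erase T₀, ∏ x ∈ T, (-x⁻¹) :=
    eq_neg_of_add_eq_zero_left hzero
  have hlt : v (∑ T ∈ ((S.erase 0).powersetCard m).erase T₀, ∏ x ∈ T, (-x⁻¹))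
      < v (∏ x ∈ T₀, (-x⁻¹)) := by
    refine ultra_sum_lt v hna _ _ _ hvT₀pos ?_
    intro T hT'
    have hTmem : T ∈ (S.erase 0).powersetCard m := Finset.mem_of_mem_erase hT'
    have hTne : T ≠ T₀ := Finset.ne_of_mem_erase hT'
    obtain ⟨hTsub, _⟩ := Finset.mem_powersetCard.mp hTmem
    rw [hvP T hTsub, hvP T₀ hT₀sub]
    exact inv_strictAnti₀ (hprodpos T₀ hT₀sub) (hkey T hTmem hTne)
  have : v (∏ x ∈ T₀, (-x⁻¹)) < v (∏ x ∈ T₀, (-x⁻¹)) := by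
    calc v (∏ x ∈ T₀, (-x⁻¹))
        = v (∑ T ∈ ((S.erase 0).powersetCard m).erase T₀, ∏ x ∈ T, (-x⁻¹)) := by
          rw [heq, v.map_neg]
      _ < v (∏ x ∈ T₀, (-x⁻¹)) := hlt
  exact lt_irrefl _ this
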